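/- arXiv:0903.4504 — 3 statements merged into one kernel-verified Lean document; each statement's English description precedes it below -/
import Mathlib

section
/- Let P_1(d),...,P_ℓ(d) be polynomials with integer coefficients satisfying P_i(0)=0, write P_i(d) = ∑_{j=1}^{k} c_{ij} d^j, and let 𝒫 : ℤ^k → ℤ^ℓ be the linear map with matrix (c_{ij}). There exist constants c > 0 and C ≥ 1, depending only on the coefficients c_{ij}, such that for every positive integer N and every A ⊆ {1,...,N} with |A| = δN, there exist an integer N' ≤ CN and a vector m ∈ ℤ^ℓ such that the set B = {b ∈ [−N',N']^k : 𝒫(b) ∈ A^ℓ − m} satisfies |B| ≥ c δ^ℓ N^k. In particular, for every nonzero integer d, if (d, d², ..., d^k) ∈ B − B then (P_1(d),...,P_ℓ(d)) ∈ A^ℓ − A^ℓ. -/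
set_option maxHeartbeats 1000000

open Finset Pointwise

/-- **The lifting argument.** Write `P_i(d) = ∑_{j=1}^k c_{ij} d^j` and let
`𝒫 : ℤ^k → ℤ^ℓ` be the linear map `(𝒫 b)_i = ∑_j c_{ij} b_j`.  There are constants
`c > 0` and `C ≥ 1` (depending only on the coefficients) such that: for every `N` and
`A ⊆ [1,N]` with `|A| = δN`, there are `N' ≤ CN` and `m ∈ ℤ^ℓ` such that
`B = {b ∈ [-N',N']^k : 𝒫(b) ∈ A^ℓ - m}` has `|B| ≥ c δ^ℓ N^k`; in particular, for every
nonzero `d`, if `(d,d²,…,d^k) ∈ B - B` then `(P₁(d),…,P_ℓ(d)) ∈ A^ℓ - A^ℓ`. -/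
theorem stmt_13 (ℓ k : ℕ) (hℓ : 0 < ℓ) (hk : 0 < k) (c : Fin ℓ → Fin k → ℤ) :
    ∃ c₀ C : ℝ, 0 < c₀ ∧ 1 ≤ C ∧ ∀ N : ℕ, 0 < N → ∀ A : Finset ℤ,
      A ⊆ Finset.Icc 1 (N : ℤ) → ∀ δ : ℝ, δ = (A.card : ℝ) / N →
      ∃ (N' : ℕ) (m : Fin ℓ → ℤ), (N' : ℝ) ≤ C * N ∧
        ∀ B : Finset (Fin k → ℤ),
          B = (Fintype.piFinset fun _ : Fin k => Finset.Icc (-(N' : ℤ)) (N' : ℤ)).filter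
                (fun b => ∀ i : Fin ℓ, (∑ j : Fin k, c i j * b j) + m i ∈ A) →
          (c₀ * δ ^ ℓ * (N : ℝ) ^ k ≤ (B.card : ℝ)) ∧
          (∀ d : ℤ, d ≠ 0 → (fun j : Fin k => d ^ (j.1 + 1)) ∈ B - B →
            (fun i : Fin ℓ => ∑ j : Fin k, c i j * d ^ (j.1 + 1)) ∈
              (Fintype.piFinset fun _ : Fin ℓ => A) -
                (Fintype.piFinset fun _ : Fin ℓ => A)) := by
  set M : ℕ := 1 + ∑ i, ∑ j, (c i j).natAbs with hMdef
  have hM1 : 1 ≤ M := Nat.le_add_right 1 _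
  refine ⟨(1 : ℝ) / ((2 * M + 1 : ℝ)) ^ ℓ, 1, by positivity, le_refl 1, ?_⟩
  intro N hN A hA δ hδ
  set Box : Finset (Fin k → ℤ) :=
    Fintype.piFinset fun _ : Fin k => Finset.Icc (-(N : ℤ)) (N : ℤ) with hBoxdef
  set I : Finset ℤ := Finset.Icc (1 - (M : ℤ) * N) ((N : ℤ) + M * N) with hIdef
  set MBox : Finset (Fin ℓ → ℤ) := Fintype.piFinset fun _ : Fin ℓ => I with hMBoxdef
  -- bound on P b i for b in the box
  have hPb : ∀ b ∈ Box, ∀ i : Fin ℓ, |∑ j : Fin k, c i j * b j| ≤ (M : ℤ) * N := by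
    intro b hb i
    have hb' : ∀ j, |b j| ≤ (N : ℤ) := by
      intro j
      have := (Fintype.mem_piFinset.mp hb) j
      rw [Finset.mem_Icc] at this
      exact abs_le.mpr ⟨this.1, this.2⟩
    calc |∑ j : Fin k, c i j * b j| ≤ ∑ j : Fin k, |c i j * b j| :=
          Finset.abs_sum_le_sum_abs _ _
      _ ≤ ∑ j : Fin k, |c i j| * (N : ℤ) := by
          refine Finset.sum_le_sum fun j _ => ?_
          rw [abs_mul]
          exact mul_le_mul_of_nonneg_left (hb' j) (abs_nonneg _)
      _ = (∑ j : Fin k, |c i j|) * N := by rw [Finset.sum_mul]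
      _ ≤ (M : ℤ) * N := by
          refine mul_le_mul_of_nonneg_right ?_ (by positivity)
          have : (∑ j : Fin k, |c i j|) = ((∑ j : Fin k, (c i j).natAbs : ℕ) : ℤ) := by
            push_cast
            rfl
          rw [this, hMdef]
          have h1 : (∑ j : Fin k, (c i j).natAbs) ≤ ∑ i', ∑ j, (c i' j).natAbs :=
            Finset.single_le_sum (f := fun i' => ∑ j, (c i' j).natAbs)
              (fun _ _ => Nat.zero_le _) (Finset.mem_univ i)
          exact_mod_cast Nat.le_trans h1 (Nat.le_add_left _ 1)
  -- for each b ∈ Box, the filter of MBox has card A.card ^ ℓ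
  have hfib : ∀ b ∈ Box,
      (MBox.filter fun m => ∀ i : Fin ℓ, (∑ j : Fin k, c i j * b j) + m i ∈ A).card
        = A.card ^ ℓ := by
    intro b hb
    have hsplit : (MBox.filter fun m => ∀ i : Fin ℓ, (∑ j : Fin k, c i j * b j) + m i ∈ A)
        = Fintype.piFinset (fun i : Fin ℓ =>
            I.filter fun x => (∑ j : Fin k, c i j * b j) + x ∈ A) := by
      ext m
      simp only [Finset.mem_filter, Fintype.mem_piFinset, hMBoxdef]
      exact ⟨fun ⟨h1, h2⟩ i => ⟨h1 i, h2 i⟩, fun h => ⟨fun i => (h i).1, fun i => (h i).2⟩⟩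
    rw [hsplit, Fintype.card_piFinset]
    have himg : ∀ i : Fin ℓ,
        (I.filter fun x => (∑ j : Fin k, c i j * b j) + x ∈ A)
          = A.image (fun a => a - ∑ j : Fin k, c i j * b j) := by
      intro i
      have ht := hPb b hb i
      rw [abs_le] at ht
      ext x
      simp only [Finset.mem_filter, hIdef, Finset.mem_Icc, Finset.mem_image]
      constructor
      · rintro ⟨-, hx⟩
        exact ⟨(∑ j : Fin k, c i j * b j) + x, hx, by ring⟩
      · rintro ⟨a, ha, rfl⟩
        have haI := hA ha
        rw [Finset.mem_Icc] at haI
        refine ⟨⟨by linarith [ht.1, ht.2, haI.1], by linarith [ht.1, ht.2, haI.2]⟩, ?_⟩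
        have : (∑ j : Fin k, c i j * b j) + (a - ∑ j : Fin k, c i j * b j) = a := by ring
        rw [this]; exact ha
    calc (∏ i : Fin ℓ, (I.filter fun x => (∑ j : Fin k, c i j * b j) + x ∈ A).card)
        = ∏ i : Fin ℓ, A.card := by
          refine Finset.prod_congr rfl fun i _ => ?_
          rw [himg i]
          exact Finset.card_image_of_injective _ sub_left_injective
      _ = A.card ^ ℓ := by simp
  -- double counting
  have hsum : ∑ m ∈ MBox,
      (Box.filter fun b => ∀ i : Fin ℓ, (∑ j : Fin k, c i j * b j) + m i ∈ A).card
        = Box.card * A.card ^ ℓ := by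
    simp_rw [Finset.card_filter]
    rw [Finset.sum_comm]
    calc ∑ b ∈ Box, ∑ m ∈ MBox,
          (if ∀ i : Fin ℓ, (∑ j : Fin k, c i j * b j) + m i ∈ A then 1 else 0)
        = ∑ b ∈ Box, A.card ^ ℓ := by
          refine Finset.sum_congr rfl fun b hb => ?_
          rw [← Finset.card_filter, hfib b hb]
      _ = Box.card * A.card ^ ℓ := by rw [Finset.sum_const, smul_eq_mul]
  -- cardinalities of the boxes
  have hBoxcard : Box.card = (2 * N + 1) ^ k := by
    rw [hBoxdef, Fintype.card_piFinset]
    have : (Finset.Icc (-(N : ℤ)) (N : ℤ)).card = 2 * N + 1 := by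
      rw [Int.card_Icc]
      have h2 : (N : ℤ) + 1 - -(N : ℤ) = ((2 * N + 1 : ℕ) : ℤ) := by push_cast; ring
      rw [h2, Int.toNat_natCast]
    rw [this, Finset.prod_const, Finset.card_univ, Fintype.card_fin]
  have hIcard : I.card = (2 * M + 1) * N := by
    rw [hIdef, Int.card_Icc]
    have : (N : ℤ) + (M : ℤ) * N + 1 - (1 - (M : ℤ) * N) = (((2 * M + 1) * N : ℕ) : ℤ) := by
      push_cast; ring
    rw [this, Int.toNat_natCast]
  have hMBoxcard : MBox.card = ((2 * M + 1) * N) ^ ℓ := by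
    rw [hMBoxdef, Fintype.card_piFinset]
    rw [Finset.prod_congr rfl fun (i : Fin ℓ) _ => hIcard, Finset.prod_const,
      Finset.card_univ, Fintype.card_fin]
  -- pigeonhole
  have hMBne : MBox.Nonempty := by
    refine ⟨fun _ => 1, ?_⟩
    rw [hMBoxdef, Fintype.mem_piFinset]
    intro i
    rw [hIdef, Finset.mem_Icc]
    constructor
    · have : (0 : ℤ) ≤ (M : ℤ) * N := by positivity
      linarith
    · have h1 : (1 : ℤ) ≤ N := by exact_mod_cast hN
      have : (0 : ℤ) ≤ (M : ℤ) * N := by positivity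
      linarith
  obtain ⟨m, hm, hkey⟩ : ∃ m ∈ MBox, Box.card * A.card ^ ℓ ≤ MBox.card *
      (Box.filter fun b => ∀ i : Fin ℓ, (∑ j : Fin k, c i j * b j) + m i ∈ A).card := by
    refine Finset.exists_le_of_sum_le hMBne ?_
    rw [Finset.sum_const, ← Finset.mul_sum, hsum, smul_eq_mul]
  refine ⟨N, m, by simp, ?_⟩
  intro B hB
  constructor
  · -- the cardinality lower bound
    have hkey' : ((2 * N + 1) ^ k * A.card ^ ℓ : ℕ) ≤ (((2 * M + 1) * N) ^ ℓ * B.card : ℕ) := by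
      rw [← hBoxcard, ← hMBoxcard, hB]
      exact hkey
    have hkeyR : ((2 * (N : ℝ) + 1)) ^ k * (A.card : ℝ) ^ ℓ
        ≤ ((2 * (M : ℝ) + 1) * N) ^ ℓ * B.card := by
      exact_mod_cast hkey'
    have hNR : (0 : ℝ) < N := by exact_mod_cast hN
    have hMR : (0 : ℝ) < 2 * (M : ℝ) + 1 := by positivity
    have h1 : (N : ℝ) ^ k * (A.card : ℝ) ^ ℓ ≤ ((2 * (M : ℝ) + 1) * N) ^ ℓ * B.card := by
      refine le_trans ?_ hkeyR
      refine mul_le_mul_of_nonneg_right ?_ (by positivity)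
      exact pow_le_pow_left₀ (le_of_lt hNR) (by linarith) k
    rw [hδ]
    have heq : (1 : ℝ) / (2 * (M : ℝ) + 1) ^ ℓ * ((A.card : ℝ) / N) ^ ℓ * (N : ℝ) ^ k
        = ((N : ℝ) ^ k * (A.card : ℝ) ^ ℓ) / ((2 * (M : ℝ) + 1) * N) ^ ℓ := by
      rw [div_pow, mul_pow]
      field_simp
    rw [heq, div_le_iff₀ (by positivity)]
    linarith
  · -- the "in particular" part
    intro d hd hmem
    rw [Finset.mem_sub] at hmem
    obtain ⟨a, ha, b', hb', hab⟩ := hmem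
    rw [hB, Finset.mem_filter] at ha hb'
    refine Finset.mem_sub.mpr
      ⟨(fun i => (∑ j : Fin k, c i j * a j) + m i), ?_,
       (fun i => (∑ j : Fin k, c i j * b' j) + m i), ?_, ?_⟩
    · rw [Fintype.mem_piFinset]; exact ha.2
    · rw [Fintype.mem_piFinset]; exact hb'.2
    · funext i
      have habj : ∀ j : Fin k, a j - b' j = d ^ (j.1 + 1) := fun j => congrFun hab j
      show ((∑ j : Fin k, c i j * a j) + m i) - ((∑ j : Fin k, c i j * b' j) + m i)
        = ∑ j : Fin k, c i j * d ^ (j.1 + 1)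
      have : (∑ j : Fin k, c i j * a j) - (∑ j : Fin k, c i j * b' j)
          = ∑ j : Fin k, c i j * (a j - b' j) := by
        rw [← Finset.sum_sub_distrib]
        exact Finset.sum_congr rfl fun j _ => (mul_sub _ _ _).symm
      calc ((∑ j : Fin k, c i j * a j) + m i) - ((∑ j : Fin k, c i j * b' j) + m i)
          = (∑ j : Fin k, c i j * a j) - (∑ j : Fin k, c i j * b' j) := by ring
        _ = ∑ j : Fin k, c i j * (a j - b' j) := this
        _ = ∑ j : Fin k, c i j * d ^ (j.1 + 1) :=
            Finset.sum_congr rfl fun j _ => by rw [habj j]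
end

section
/- Let k ≥ 2, Q_M = [1,M] × [1,M²] × ⋯ × [1,M^k], ε = (10k)^{-1}, and S = {(d, d², ..., d^k) : 1 ≤ d ≤ εM}. Let B ⊆ Q_M, δ = |B|/|Q_M|, f_B = 1_B − δ·1_{Q_M}, and B' = B ∩ ((εM, (1−ε)M] × (εM², (1−ε)M²] × ⋯ × (εM^k, (1−ε)M^k]). If ∑_{m,n ∈ ℤ^k} 1_B(m) 1_B(n) 1_S(m−n) ≤ (1/4) δ |B| |S| and |B'| ≥ (3/4)|B|, then ∑_{m,n ∈ ℤ^k} f_B(m) f_B(n) 1_S(m−n) ≤ −(1/4) δ |B| |S|. -/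
open Finset

/-- The box `Q_M = [1,M] × [1,M²] × ⋯ × [1,M^k] ⊆ ℤ^k`. -/
noncomputable def QM (k M : ℕ) : Finset (Fin k → ℤ) :=
  Fintype.piFinset fun j : Fin k => Finset.Icc 1 ((M : ℤ) ^ (j.1 + 1))

/-- The curve `S = {(d,d²,…,d^k) : 1 ≤ d ≤ εM}` with `ε = (10k)⁻¹`. -/
def SF (k M : ℕ) : Finset (Fin k → ℤ) :=
  (Finset.Icc 1 (M / (10 * k))).image fun d : ℕ => fun j : Fin k => (d : ℤ) ^ (j.1 + 1)


lemma sEps (k M : ℕ) (hk : 2 ≤ k) {s : Fin k → ℤ} (hs : s ∈ SF k M) (j : Fin k) :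
    1 ≤ s j ∧ (s j : ℝ) ≤ (1 / (10 * (k : ℝ))) * (M : ℝ) ^ (j.1 + 1) := by
  obtain ⟨d, hd, rfl⟩ := Finset.mem_image.mp hs
  obtain ⟨hd1, hd2⟩ := Finset.mem_Icc.mp hd
  have hk0 : (1:ℝ) ≤ 10 * k := by
    have : (2:ℝ) ≤ k := by exact_mod_cast hk
    nlinarith
  constructor
  · show 1 ≤ (d:ℤ)^(j.1+1)
    exact_mod_cast Nat.one_le_pow _ _ (by omega)
  · show (((d:ℤ)^(j.1+1) : ℤ) : ℝ) ≤ _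
    have hdr : (d : ℝ) ≤ (M:ℝ) / (10 * k) := by
      calc (d:ℝ) ≤ ((M / (10 * k) : ℕ) : ℝ) := by exact_mod_cast hd2
        _ ≤ (M:ℝ) / ((10 * k : ℕ) : ℝ) := Nat.cast_div_le
        _ = (M:ℝ) / (10 * k) := by push_cast; ring
    have h1 : ((d:ℝ))^(j.1+1) ≤ ((M:ℝ) / (10*k))^(j.1+1) := pow_le_pow_left₀ (by positivity) hdr _
    have h2 : ((M:ℝ) / (10*k))^(j.1+1) ≤ (1 / (10 * (k : ℝ))) * (M : ℝ) ^ (j.1 + 1) := by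
      rw [div_pow]
      have hpow : (10*(k:ℝ)) ≤ (10*(k:ℝ))^(j.1+1) := le_self_pow₀ hk0 (by omega)
      calc (M:ℝ)^(j.1+1) / (10*(k:ℝ))^(j.1+1) ≤ (M:ℝ)^(j.1+1) / (10*(k:ℝ)) :=
            div_le_div_of_nonneg_left (by positivity) (by linarith) hpow
        _ = (1 / (10 * (k : ℝ))) * (M : ℝ) ^ (j.1 + 1) := by ring
    push_cast
    linarith

lemma memQ_shift (k M : ℕ) (hk : 2 ≤ k) {m s : Fin k → ℤ}
    (hm : ∀ j : Fin k,
      (1 / (10 * (k : ℝ))) * (M : ℝ) ^ (j.1 + 1) < (m j : ℝ) ∧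
      (m j : ℝ) ≤ (1 - 1 / (10 * (k : ℝ))) * (M : ℝ) ^ (j.1 + 1))
    (hs : s ∈ SF k M) : m - s ∈ QM k M ∧ m + s ∈ QM k M := by
  have hε : (0:ℝ) < 1 / (10 * k) := by
    have : (2:ℝ) ≤ k := by exact_mod_cast hk
    positivity
  constructor <;> rw [QM, Fintype.mem_piFinset] <;> intro j <;>
    obtain ⟨hs1, hs2⟩ := sEps k M hk hs j <;>
    obtain ⟨hm1, hm2⟩ := hm j <;>
    rw [Finset.mem_Icc]
  · constructor
    · have : (s j : ℝ) < (m j : ℝ) := by linarith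
      have : s j < m j := by exact_mod_cast this
      simp only [Pi.sub_apply]
      omega
    · have hmM : (m j : ℝ) ≤ ((M:ℝ))^(j.1+1) := by
        nlinarith [pow_nonneg (Nat.cast_nonneg (α := ℝ) M) (j.1+1)]
      have : (m j) ≤ (M:ℤ)^(j.1+1) := by exact_mod_cast hmM
      simp only [Pi.sub_apply]
      omega
  · constructor
    · have : (0:ℝ) < (m j : ℝ) := by
        nlinarith [pow_nonneg (Nat.cast_nonneg (α := ℝ) M) (j.1+1)]
      have : 0 < m j := by exact_mod_cast this
      simp only [Pi.add_apply]
      omega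
    · have : ((m j : ℝ) + (s j : ℝ)) ≤ ((M:ℝ))^(j.1+1) := by nlinarith
      have : m j + s j ≤ (M:ℤ)^(j.1+1) := by exact_mod_cast this
      simpa using this

/-- **Balance function estimate (4).** If
`∑_{m,n} 1_B(m)1_B(n)1_S(m-n) ≤ (1/4)δ|B||S|` (non-randomness) and `|B'| ≥ (3/4)|B|`
(where `B'` is the part of `B` in the `ε`-shrunk box), then
`∑_{m,n} f_B(m)f_B(n)1_S(m-n) ≤ -(1/4)δ|B||S|`, where `f_B = 1_B - δ·1_{Q_M}`
(the sums range over `ℤ^k`, but all summands vanish off `Q_M`). -/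
theorem stmt_15 (k M : ℕ) (hk : 2 ≤ k) (hM : 0 < M)
    (B : Finset (Fin k → ℤ)) (hB : B ⊆ QM k M)
    (δ : ℝ) (hδ : δ = (B.card : ℝ) / ((QM k M).card : ℝ))
    (h1 : ∑ m ∈ B, ∑ n ∈ B, (if m - n ∈ SF k M then (1 : ℝ) else 0) ≤
      (1 / 4) * δ * B.card * ((SF k M).card : ℝ))
    (h2 : (3 / 4) * (B.card : ℝ) ≤
      ((B.filter fun m => ∀ j : Fin k,
        (1 / (10 * (k : ℝ))) * (M : ℝ) ^ (j.1 + 1) < (m j : ℝ) ∧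
        (m j : ℝ) ≤ (1 - 1 / (10 * (k : ℝ))) * (M : ℝ) ^ (j.1 + 1)).card : ℝ)) :
    ∑ m ∈ QM k M, ∑ n ∈ QM k M,
        ((if m ∈ B then (1 : ℝ) else 0) - δ) * ((if n ∈ B then (1 : ℝ) else 0) - δ) *
          (if m - n ∈ SF k M then (1 : ℝ) else 0) ≤
      -((1 / 4) * δ * B.card * ((SF k M).card : ℝ)) := by
  classical
  set Q := QM k M with hQdef
  set S := SF k M with hSdef
  set B' := B.filter (fun m => ∀ j : Fin k,
        (1 / (10 * (k : ℝ))) * (M : ℝ) ^ (j.1 + 1) < (m j : ℝ) ∧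
        (m j : ℝ) ≤ (1 - 1 / (10 * (k : ℝ))) * (M : ℝ) ^ (j.1 + 1)) with hB'def
  -- Q is nonempty
  have hQpos : 0 < Q.card := by
    apply Finset.card_pos.mpr
    refine ⟨fun j => 1, ?_⟩
    rw [hQdef, QM, Fintype.mem_piFinset]
    intro j
    rw [Finset.mem_Icc]
    refine ⟨le_refl _, ?_⟩
    exact_mod_cast Nat.one_le_pow _ _ hM
  have hδ0 : 0 ≤ δ := by
    rw [hδ]; positivity
  have hδQ : δ * Q.card = B.card := by
    rw [hδ]
    field_simp
  -- abbreviations for the four double sums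
  set A := ∑ m ∈ Q, ∑ n ∈ Q, ((if m ∈ B then (1:ℝ) else 0) * (if n ∈ B then (1:ℝ) else 0) *
      (if m - n ∈ S then (1:ℝ) else 0)) with hAdef
  set C := ∑ m ∈ Q, ∑ n ∈ Q, ((if m ∈ B then (1:ℝ) else 0) * (if m - n ∈ S then (1:ℝ) else 0)) with hCdef
  set D := ∑ m ∈ Q, ∑ n ∈ Q, ((if n ∈ B then (1:ℝ) else 0) * (if m - n ∈ S then (1:ℝ) else 0)) with hDdef
  set E := ∑ m ∈ Q, ∑ n ∈ Q, (if m - n ∈ S then (1:ℝ) else 0) with hEdef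
  have expand : ∑ m ∈ Q, ∑ n ∈ Q,
        ((if m ∈ B then (1 : ℝ) else 0) - δ) * ((if n ∈ B then (1 : ℝ) else 0) - δ) *
          (if m - n ∈ S then (1 : ℝ) else 0)
      = A - δ * C - δ * D + δ * δ * E := by
    rw [hAdef, hCdef, hDdef, hEdef, Finset.mul_sum, Finset.mul_sum, Finset.mul_sum,
      ← Finset.sum_sub_distrib, ← Finset.sum_sub_distrib, ← Finset.sum_add_distrib]
    refine Finset.sum_congr rfl fun m _ => ?_
    rw [Finset.mul_sum, Finset.mul_sum, Finset.mul_sum,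
      ← Finset.sum_sub_distrib, ← Finset.sum_sub_distrib, ← Finset.sum_add_distrib]
    refine Finset.sum_congr rfl fun n _ => ?_
    ring
  -- A equals the sum over B × B
  have hA : A = ∑ m ∈ B, ∑ n ∈ B, (if m - n ∈ S then (1:ℝ) else 0) := by
    rw [hAdef, ← Finset.sum_subset hB (fun m _ hm => by simp [hm])]
    refine Finset.sum_congr rfl fun m hm => ?_
    rw [← Finset.sum_subset hB (fun n _ hn => by simp [hn])]
    exact Finset.sum_congr rfl fun n hn => by simp [hm, hn]
  -- lower bound for C
  have hC : (3:ℝ)/4 * B.card * S.card ≤ C := by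
    have hCeq : C = ∑ m ∈ B, ∑ n ∈ Q, (if m - n ∈ S then (1:ℝ) else 0) := by
      rw [hCdef, ← Finset.sum_subset hB (fun m _ hm => by simp [hm])]
      refine Finset.sum_congr rfl fun m hm => ?_
      exact Finset.sum_congr rfl fun n _ => by simp [hm]
    rw [hCeq]
    have step1 : ∀ m ∈ B', (S.card : ℝ) ≤ ∑ n ∈ Q, (if m - n ∈ S then (1:ℝ) else 0) := by
      intro m hm
      rw [Finset.sum_boole]
      have : S.card ≤ (Q.filter fun n => m - n ∈ S).card := by
        apply Finset.card_le_card_of_injOn (fun s => m - s)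
        · intro s hsS
          rw [Finset.mem_coe, Finset.mem_filter]
          constructor
          · exact (memQ_shift k M hk (Finset.mem_filter.mp hm).2 hsS).1
          · show m - (m - s) ∈ S
            rwa [sub_sub_cancel]
        · intro a _ b _ hab
          exact sub_right_injective hab
      exact_mod_cast this
    calc (3:ℝ)/4 * B.card * S.card ≤ (B'.card : ℝ) * S.card := by
          apply mul_le_mul_of_nonneg_right h2 (Nat.cast_nonneg _)
      _ = ∑ _m ∈ B', (S.card : ℝ) := by rw [Finset.sum_const, nsmul_eq_mul]
      _ ≤ ∑ m ∈ B', ∑ n ∈ Q, (if m - n ∈ S then (1:ℝ) else 0) := Finset.sum_le_sum step1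
      _ ≤ ∑ m ∈ B, ∑ n ∈ Q, (if m - n ∈ S then (1:ℝ) else 0) :=
          Finset.sum_le_sum_of_subset_of_nonneg (Finset.filter_subset _ _)
            (fun m _ _ => Finset.sum_nonneg fun n _ => by positivity)
  -- lower bound for D
  have hD : (3:ℝ)/4 * B.card * S.card ≤ D := by
    have hDeq : D = ∑ n ∈ B, ∑ m ∈ Q, (if m - n ∈ S then (1:ℝ) else 0) := by
      rw [hDdef, Finset.sum_comm, ← Finset.sum_subset hB (fun n _ hn => by simp [hn])]
      refine Finset.sum_congr rfl fun n hn => ?_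
      exact Finset.sum_congr rfl fun m _ => by simp [hn]
    rw [hDeq]
    have step1 : ∀ n ∈ B', (S.card : ℝ) ≤ ∑ m ∈ Q, (if m - n ∈ S then (1:ℝ) else 0) := by
      intro n hn
      rw [Finset.sum_boole]
      have : S.card ≤ (Q.filter fun m => m - n ∈ S).card := by
        apply Finset.card_le_card_of_injOn (fun s => n + s)
        · intro s hsS
          rw [Finset.mem_coe, Finset.mem_filter]
          constructor
          · exact (memQ_shift k M hk (Finset.mem_filter.mp hn).2 hsS).2
          · show n + s - n ∈ S
            rwa [add_sub_cancel_left]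
        · intro a _ b _ hab
          exact add_right_injective n hab
      exact_mod_cast this
    calc (3:ℝ)/4 * B.card * S.card ≤ (B'.card : ℝ) * S.card := by
          apply mul_le_mul_of_nonneg_right h2 (Nat.cast_nonneg _)
      _ = ∑ _n ∈ B', (S.card : ℝ) := by rw [Finset.sum_const, nsmul_eq_mul]
      _ ≤ ∑ n ∈ B', ∑ m ∈ Q, (if m - n ∈ S then (1:ℝ) else 0) := Finset.sum_le_sum step1
      _ ≤ ∑ n ∈ B, ∑ m ∈ Q, (if m - n ∈ S then (1:ℝ) else 0) :=
          Finset.sum_le_sum_of_subset_of_nonneg (Finset.filter_subset _ _)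
            (fun n _ _ => Finset.sum_nonneg fun m _ => by positivity)
  -- upper bound for E
  have hE : E ≤ (Q.card : ℝ) * S.card := by
    rw [hEdef]
    calc ∑ m ∈ Q, ∑ n ∈ Q, (if m - n ∈ S then (1:ℝ) else 0)
        ≤ ∑ _m ∈ Q, (S.card : ℝ) := by
          apply Finset.sum_le_sum
          intro m _
          rw [Finset.sum_boole]
          have : (Q.filter fun n => m - n ∈ S).card ≤ S.card := by
            apply Finset.card_le_card_of_injOn (fun n => m - n)
            · intro n hn
              exact (Finset.mem_filter.mp hn).2
            · intro a _ b _ hab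
              exact sub_right_injective hab
          exact_mod_cast this
      _ = (Q.card : ℝ) * S.card := by rw [Finset.sum_const, nsmul_eq_mul]
  -- combine
  rw [← hA] at h1
  rw [expand]
  have hCδ : δ * ((3:ℝ)/4 * B.card * S.card) ≤ δ * C := mul_le_mul_of_nonneg_left hC hδ0
  have hDδ : δ * ((3:ℝ)/4 * B.card * S.card) ≤ δ * D := mul_le_mul_of_nonneg_left hD hδ0
  have hEδ : δ * δ * E ≤ δ * (B.card : ℝ) * S.card := by
    calc δ * δ * E ≤ δ * δ * ((Q.card : ℝ) * S.card) := by
          apply mul_le_mul_of_nonneg_left hE (by positivity)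
      _ = δ * (δ * Q.card) * S.card := by ring
      _ = δ * (B.card : ℝ) * S.card := by rw [hδQ]
  nlinarith [h1, hCδ, hDδ, hEδ]
end

section
/- Let k ≥ 2 and for β = (β_1,...,β_k) ∈ ℝ^k and a positive integer N define v_N(β) = ∫_0^N e^{2πi(β_1 x + β_2 x² + ⋯ + β_k x^k)} dx. Then there exists a constant C > 0 depending only on k such that |v_N(β)| ≤ C N (1 + ∑_{j=1}^{k} N^j |β_j|)^{−1/k} for all β ∈ ℝ^k and all positive integers N. -/
open Finset intervalIntegral Set

set_option maxHeartbeats 1000000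


lemma signConst {g : ℝ → ℝ} {a b : ℝ} (hg : ContinuousOn g (Set.Icc a b))
    (h0 : ∀ x ∈ Set.Icc a b, g x ≠ 0) :
    (∀ x ∈ Set.Icc a b, 0 < g x) ∨ (∀ x ∈ Set.Icc a b, g x < 0) := by
  by_contra hc
  push_neg at hc
  obtain ⟨⟨x, hx, hgx⟩, ⟨y, hy, hgy⟩⟩ := hc
  have hxy : Set.uIcc x y ⊆ Set.Icc a b := Set.uIcc_subset_Icc hx hy
  have : (0:ℝ) ∈ Set.uIcc (g x) (g y) := by
    rw [Set.mem_uIcc]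
    left
    exact ⟨hgx, hgy⟩
  obtain ⟨z, hz, hgz⟩ := intermediate_value_uIcc (hg.mono hxy) this
  exact h0 z (hxy hz) hgz

lemma parts {F0 F1 F2 : ℝ → ℝ} {a b lam : ℝ} (hab : a ≤ b) (hlam : 0 < lam)
    (h0 : ∀ x, HasDerivAt F0 (F1 x) x) (h1 : ∀ x, HasDerivAt F1 (F2 x) x)
    (h2 : Continuous F2)
    (hl : ∀ x ∈ Set.Icc a b, lam ≤ |F1 x|) :
    ‖∫ x in a..b, Complex.exp (Complex.I * (F0 x : ℂ))‖ ≤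
      2/lam + ∫ x in a..b, |F2 x| / (F1 x)^2 := by
  have hI : Set.uIcc a b = Set.Icc a b := Set.uIcc_of_le hab
  have hF1c : Continuous F1 := by
    refine continuous_iff_continuousAt.2 fun x => (h1 x).continuousAt
  have hF0c : Continuous F0 := by
    refine continuous_iff_continuousAt.2 fun x => (h0 x).continuousAt
  have hne : ∀ x ∈ Set.Icc a b, F1 x ≠ 0 := fun x hx h => by
    have := hl x hx; rw [h, abs_zero] at this; linarith
  set v : ℝ → ℂ := fun x => Complex.exp (Complex.I * (F0 x : ℂ)) with hv
  set u : ℝ → ℂ := fun x => ((F1 x)⁻¹ : ℝ) * (-Complex.I) with hu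
  set v' : ℝ → ℂ := fun x => ((F1 x : ℂ) * Complex.I) * v x with hv'
  set u' : ℝ → ℂ := fun x => ((-F2 x / (F1 x)^2 : ℝ) : ℂ) * (-Complex.I) with hu'
  have hvnorm : ∀ x : ℝ, ‖v x‖ = 1 := by
    intro x
    rw [hv]
    simp [Complex.norm_exp]
  have hwne : ∀ x ∈ Set.Icc a b, ((F1 x : ℂ) * Complex.I) ≠ 0 := by
    intro x hx
    simp [Complex.ext_iff, hne x hx]
  have hvd : ∀ x ∈ Set.uIcc a b, HasDerivAt v (v' x) x := by
    intro x _
    have : HasDerivAt (fun y : ℝ => Complex.I * (F0 y : ℂ)) (Complex.I * (F1 x : ℂ)) x :=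
      ((h0 x).ofReal_comp).const_mul Complex.I
    have := this.cexp
    convert this using 1
    rw [hv', hv]; ring
  have hud : ∀ x ∈ Set.uIcc a b, HasDerivAt u (u' x) x := by
    intro x hx
    rw [hI] at hx
    have hr : HasDerivAt (fun y => (F1 y)⁻¹) (-F2 x / (F1 x)^2) x := (h1 x).inv (hne x hx)
    exact (hr.ofReal_comp).mul_const (-Complex.I)
  have hu'int : IntervalIntegrable u' MeasureTheory.volume a b := by
    apply ContinuousOn.intervalIntegrable
    rw [hI]
    have hco : ContinuousOn (fun x => -F2 x / (F1 x)^2) (Set.Icc a b) :=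
      ((h2.neg).continuousOn).div ((hF1c.pow 2).continuousOn)
        (fun x hx => pow_ne_zero 2 (hne x hx))
    exact (Complex.continuous_ofReal.comp_continuousOn hco).mul continuousOn_const
  have hv'int : IntervalIntegrable v' MeasureTheory.volume a b := by
    apply Continuous.intervalIntegrable
    fun_prop
  have key : ∫ x in a..b, u x * v' x = u b * v b - u a * v a - ∫ x in a..b, u' x * v x :=
    intervalIntegral.integral_mul_deriv_eq_deriv_mul hud hvd hu'int hv'int
  have heq : ∫ x in a..b, Complex.exp (Complex.I * (F0 x : ℂ)) = ∫ x in a..b, u x * v' x := by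
    apply intervalIntegral.integral_congr
    intro x hx
    rw [hI] at hx
    rw [hu, hv', hv]
    dsimp only
    have h1x : (F1 x : ℂ) ≠ 0 := by
      simpa using hne x hx
    push_cast
    field_simp
    rw [Complex.I_sq]
    ring
  rw [heq, key]
  have hub : ∀ x ∈ Set.Icc a b, ‖u x * v x‖ ≤ 1/lam := by
    intro x hx
    rw [norm_mul, hvnorm, mul_one, hu]
    dsimp only
    rw [norm_mul, norm_neg]
    simp only [Complex.norm_real, Real.norm_eq_abs, Complex.norm_I, mul_one]
    rw [abs_inv, one_div]
    exact inv_anti₀ hlam (hl x hx)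
  have h1b : ‖u b * v b‖ ≤ 1/lam := hub b ⟨hab, le_refl b⟩
  have h1a : ‖u a * v a‖ ≤ 1/lam := hub a ⟨le_refl a, hab⟩
  have h3 : ‖∫ x in a..b, u' x * v x‖ ≤ ∫ x in a..b, |F2 x| / (F1 x)^2 := by
    have := intervalIntegral.norm_integral_le_integral_norm (μ := MeasureTheory.volume)
      (f := fun x => u' x * v x) hab
    refine this.trans (le_of_eq ?_)
    apply intervalIntegral.integral_congr
    intro x hx
    rw [hI] at hx
    dsimp only
    rw [norm_mul, hvnorm, mul_one]
    rw [hu']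
    dsimp only
    rw [norm_mul, norm_neg]
    simp only [Complex.norm_real, Real.norm_eq_abs, Complex.norm_I, mul_one]
    rw [abs_div, abs_neg, abs_pow, sq_abs]
  calc ‖u b * v b - u a * v a - ∫ x in a..b, u' x * v x‖
      ≤ ‖u b * v b - u a * v a‖ + ‖∫ x in a..b, u' x * v x‖ := norm_sub_le _ _
    _ ≤ (‖u b * v b‖ + ‖u a * v a‖) + ‖∫ x in a..b, u' x * v x‖ := by
        gcongr; exact norm_sub_le _ _
    _ ≤ (1/lam + 1/lam) + ∫ x in a..b, |F2 x| / (F1 x)^2 := by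
        gcongr
    _ = 2/lam + ∫ x in a..b, |F2 x| / (F1 x)^2 := by ring


lemma baseA {F0 F1 F2 : ℝ → ℝ} {a b lam : ℝ} (hab : a ≤ b) (hlam : 0 < lam)
    (h0 : ∀ x, HasDerivAt F0 (F1 x) x) (h1 : ∀ x, HasDerivAt F1 (F2 x) x)
    (h2 : Continuous F2)
    (hl : ∀ x ∈ Set.Icc a b, lam ≤ |F1 x|)
    (hsgn : (∀ x ∈ Set.Icc a b, 0 ≤ F2 x) ∨ (∀ x ∈ Set.Icc a b, F2 x ≤ 0)) :
    ‖∫ x in a..b, Complex.exp (Complex.I * (F0 x : ℂ))‖ ≤ 3/lam := by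
  have hI : Set.uIcc a b = Set.Icc a b := Set.uIcc_of_le hab
  have hF1c : Continuous F1 := continuous_iff_continuousAt.2 fun x => (h1 x).continuousAt
  have hne : ∀ x ∈ Set.Icc a b, F1 x ≠ 0 := fun x hx h => by
    have := hl x hx; rw [h, abs_zero] at this; linarith
  have hmema : a ∈ Set.Icc a b := ⟨le_refl a, hab⟩
  have hmemb : b ∈ Set.Icc a b := ⟨hab, le_refl b⟩
  have hint : IntervalIntegrable (fun x => F2 x / (F1 x)^2) MeasureTheory.volume a b := by
    apply ContinuousOn.intervalIntegrable
    rw [hI]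
    exact (h2.continuousOn).div ((hF1c.pow 2).continuousOn)
      (fun x hx => pow_ne_zero 2 (hne x hx))
  have hftc : ∫ x in a..b, F2 x / (F1 x)^2 = (F1 a)⁻¹ - (F1 b)⁻¹ := by
    have : ∫ x in a..b, F2 x / (F1 x)^2 = (fun x => -(F1 x)⁻¹) b - (fun x => -(F1 x)⁻¹) a := by
      apply intervalIntegral.integral_eq_sub_of_hasDerivAt _ hint
      intro x hx
      rw [hI] at hx
      have := ((h1 x).inv (hne x hx)).neg
      convert this using 1
      · funext y; simp
      · ring
    rw [this]; ring
  -- bound |1/F1 a - 1/F1 b| ≤ 1/lam using constant sign of F1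
  have hbnd : |(F1 a)⁻¹ - (F1 b)⁻¹| ≤ 1/lam := by
    rcases signConst hF1c.continuousOn hne with hpos | hneg
    · have ha1 : 0 < (F1 a)⁻¹ := inv_pos.2 (hpos a hmema)
      have hb1 : 0 < (F1 b)⁻¹ := inv_pos.2 (hpos b hmemb)
      have ha2 : (F1 a)⁻¹ ≤ 1/lam := by
        rw [one_div]
        apply inv_anti₀ hlam
        have := hl a hmema; rwa [abs_of_pos (hpos a hmema)] at this
      have hb2 : (F1 b)⁻¹ ≤ 1/lam := by
        rw [one_div]
        apply inv_anti₀ hlam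
        have := hl b hmemb; rwa [abs_of_pos (hpos b hmemb)] at this
      rw [abs_sub_le_iff]; constructor <;> linarith
    · have ha1 : (F1 a)⁻¹ < 0 := inv_lt_zero.2 (hneg a hmema)
      have hb1 : (F1 b)⁻¹ < 0 := inv_lt_zero.2 (hneg b hmemb)
      have key : ∀ x ∈ Set.Icc a b, -(1/lam) ≤ (F1 x)⁻¹ := by
        intro x hx
        have hx0 := hneg x hx
        have hxl : F1 x ≤ -lam := by
          have := hl x hx; rw [abs_of_neg hx0] at this; linarith
        have := one_div_le_one_div_of_neg_of_le (by linarith : -lam < 0) hxl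
        rw [one_div, one_div] at this
        calc -(1/lam) = (-lam)⁻¹ := by rw [one_div, inv_neg]
          _ ≤ (F1 x)⁻¹ := this
      have ha2 := key a hmema
      have hb2 := key b hmemb
      rw [abs_sub_le_iff]; constructor <;> linarith
  have habs : ∫ x in a..b, |F2 x| / (F1 x)^2 ≤ 1/lam := by
    rcases hsgn with hp | hn
    · have : ∫ x in a..b, |F2 x| / (F1 x)^2 = ∫ x in a..b, F2 x / (F1 x)^2 := by
        apply intervalIntegral.integral_congr
        intro x hx
        rw [hI] at hx
        dsimp only
        rw [abs_of_nonneg (hp x hx)]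
      rw [this, hftc]
      calc (F1 a)⁻¹ - (F1 b)⁻¹ ≤ |(F1 a)⁻¹ - (F1 b)⁻¹| := le_abs_self _
        _ ≤ 1/lam := hbnd
    · have : ∫ x in a..b, |F2 x| / (F1 x)^2 = ∫ x in a..b, -(F2 x / (F1 x)^2) := by
        apply intervalIntegral.integral_congr
        intro x hx
        rw [hI] at hx
        dsimp only
        rw [abs_of_nonpos (hn x hx)]
        ring
      rw [this, intervalIntegral.integral_neg, hftc]
      calc -((F1 a)⁻¹ - (F1 b)⁻¹) ≤ |(F1 a)⁻¹ - (F1 b)⁻¹| := neg_le_abs _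
        _ ≤ 1/lam := hbnd
  calc ‖∫ x in a..b, Complex.exp (Complex.I * (F0 x : ℂ))‖
      ≤ 2/lam + ∫ x in a..b, |F2 x| / (F1 x)^2 := parts hab hlam h0 h1 h2 hl
    _ ≤ 2/lam + 1/lam := by linarith
    _ = 3/lam := by ring

lemma baseB {F0 F1 F2 : ℝ → ℝ} {a b lam M : ℝ} (hab : a ≤ b) (hlam : 0 < lam)
    (h0 : ∀ x, HasDerivAt F0 (F1 x) x) (h1 : ∀ x, HasDerivAt F1 (F2 x) x)
    (h2 : Continuous F2)
    (hl : ∀ x ∈ Set.Icc a b, lam ≤ |F1 x|)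
    (hM : ∀ x ∈ Set.Icc a b, |F2 x| ≤ M)
    (hMb : (b - a) * M ≤ lam) :
    ‖∫ x in a..b, Complex.exp (Complex.I * (F0 x : ℂ))‖ ≤ 3/lam := by
  have hI : Set.uIcc a b = Set.Icc a b := Set.uIcc_of_le hab
  have hF1c : Continuous F1 := continuous_iff_continuousAt.2 fun x => (h1 x).continuousAt
  have hne : ∀ x ∈ Set.Icc a b, F1 x ≠ 0 := fun x hx h => by
    have := hl x hx; rw [h, abs_zero] at this; linarith
  have hint : IntervalIntegrable (fun x => |F2 x| / (F1 x)^2) MeasureTheory.volume a b := by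
    apply ContinuousOn.intervalIntegrable
    rw [hI]
    exact (h2.abs.continuousOn).div ((hF1c.pow 2).continuousOn)
      (fun x hx => pow_ne_zero 2 (hne x hx))
  have habs : ∫ x in a..b, |F2 x| / (F1 x)^2 ≤ 1/lam := by
    have hmono : ∫ x in a..b, |F2 x| / (F1 x)^2 ≤ ∫ _x in a..b, M/lam^2 := by
      have hM0 : 0 ≤ M := (abs_nonneg _).trans (hM a ⟨le_refl a, hab⟩)
      apply intervalIntegral.integral_mono_on hab hint (intervalIntegrable_const)
      intro x hx
      have hsq : lam^2 ≤ (F1 x)^2 := by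
        have := hl x hx
        calc lam^2 = lam * lam := sq lam
          _ ≤ |F1 x| * |F1 x| := mul_le_mul this this (le_of_lt hlam) (abs_nonneg _)
          _ = (F1 x)^2 := by rw [← abs_mul, ← sq, abs_sq]
      exact div_le_div₀ hM0 (hM x hx) (by positivity) hsq
    rw [intervalIntegral.integral_const, smul_eq_mul] at hmono
    calc ∫ x in a..b, |F2 x| / (F1 x)^2 ≤ (b - a) * (M/lam^2) := hmono
      _ = ((b - a) * M)/lam^2 := by ring
      _ ≤ lam/lam^2 := by
          apply div_le_div_of_nonneg_right hMb (by positivity) |>.trans_eq rfl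
      _ = 1/lam := by field_simp
  calc ‖∫ x in a..b, Complex.exp (Complex.I * (F0 x : ℂ))‖
      ≤ 2/lam + ∫ x in a..b, |F2 x| / (F1 x)^2 := parts hab hlam h0 h1 h2 hl
    _ ≤ 2/lam + 1/lam := by linarith
    _ = 3/lam := by ring


lemma center {g : ℝ → ℝ} {a b lam : ℝ} (hab : a ≤ b) (hg : ContinuousOn g (Set.Icc a b))
    (hexp : ∀ x ∈ Set.Icc a b, ∀ y ∈ Set.Icc a b, lam * |x - y| ≤ |g x - g y|) :
    ∃ c ∈ Set.Icc a b, ∀ x ∈ Set.Icc a b, lam * |x - c| ≤ |g x| := by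
  obtain ⟨c, hc, hmin⟩ := (isCompact_Icc (a := a) (b := b)).exists_isMinOn
    (Set.nonempty_Icc.2 hab) (hg.abs)
  have hmin' : ∀ x ∈ Set.Icc a b, |g c| ≤ |g x| := fun x hx => hmin hx
  refine ⟨c, hc, fun x hx => ?_⟩
  by_cases hgc : g c = 0
  · have := hexp x hx c hc
    rwa [hgc, sub_zero] at this
  · have hne : ∀ y ∈ Set.Icc a b, g y ≠ 0 := by
      intro y hy h
      have := hmin' y hy
      rw [h, abs_zero] at this
      exact hgc (abs_eq_zero.1 (le_antisymm this (abs_nonneg _)))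
    rcases signConst hg hne with hpos | hneg
    · have h1 : g c ≤ g x := by
        have := hmin' x hx
        rwa [abs_of_pos (hpos c hc), abs_of_pos (hpos x hx)] at this
      have h2 := hexp x hx c hc
      rw [abs_of_nonneg (by linarith : (0:ℝ) ≤ g x - g c)] at h2
      rw [abs_of_pos (hpos x hx)]
      have := hpos c hc
      linarith
    · have h1 : g x ≤ g c := by
        have := hmin' x hx
        rwa [abs_of_neg (hneg c hc), abs_of_neg (hneg x hx), neg_le_neg_iff] at this
      have h2 := hexp x hx c hc
      rw [abs_of_nonpos (by linarith : g x - g c ≤ 0)] at h2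
      rw [abs_of_neg (hneg x hx)]
      have := hneg c hc
      linarith

lemma vdc (j : ℕ) (F : ℕ → ℝ → ℝ)
    (hder : ∀ i x, HasDerivAt (F i) (F (i+1) x) x)
    (hcont : ∀ i, Continuous (F i)) :
    ∀ lam a b : ℝ, 0 < lam → a ≤ b →
    (∀ x ∈ Set.Icc a b, lam ≤ |F (j+1) x|) →
    (j = 0 → (∀ x ∈ Set.Icc a b, 0 ≤ F 2 x) ∨ (∀ x ∈ Set.Icc a b, F 2 x ≤ 0)) →
    ‖∫ x in a..b, Complex.exp (Complex.I * (F 0 x : ℂ))‖ ≤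
      ((2:ℝ)^(j+3) - 2) * lam ^ (-(1:ℝ)/(j+1)) := by
  induction j with
  | zero =>
    intro lam a b hlam hab hl hsgn
    have h3 := baseA hab hlam (hder 0) (hder 1) (hcont 2) hl (hsgn rfl)
    have : lam ^ (-(1:ℝ)/((0:ℕ)+1)) = lam⁻¹ := by
      norm_num
      exact Real.rpow_neg_one lam
    rw [this]
    calc ‖∫ x in a..b, Complex.exp (Complex.I * (F 0 x : ℂ))‖ ≤ 3/lam := h3
      _ = 3 * lam⁻¹ := by rw [div_eq_mul_inv]
      _ ≤ ((2:ℝ)^(0+3) - 2) * lam⁻¹ := by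
          have : (0:ℝ) < lam⁻¹ := by positivity
          nlinarith
  | succ j ih =>
    intro lam a b hlam hab hl hsgn
    clear hsgn
    -- hl : lam ≤ |F (j+2) x| on Icc a b
    have hIcc : ∀ x ∈ Set.Icc a b, lam ≤ |F (j+1+1) x| := hl
    have hF2ne : ∀ x ∈ Set.Icc a b, F (j+2) x ≠ 0 := fun x hx h => by
      have := hIcc x hx; rw [show j+1+1 = j+2 from rfl, h, abs_zero] at this; linarith
    have hsign : (∀ x ∈ Set.Icc a b, 0 ≤ F (j+2) x) ∨ (∀ x ∈ Set.Icc a b, F (j+2) x ≤ 0) := by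
      rcases signConst ((hcont (j+2)).continuousOn) hF2ne with h | h
      · exact Or.inl (fun x hx => le_of_lt (h x hx))
      · exact Or.inr (fun x hx => le_of_lt (h x hx))
    set g := F (j+1) with hgdef
    have hexp : ∀ x ∈ Set.Icc a b, ∀ y ∈ Set.Icc a b, lam * |x - y| ≤ |g x - g y| := by
      have key : ∀ x y, x ∈ Set.Icc a b → y ∈ Set.Icc a b → x < y →
          lam * |x - y| ≤ |g x - g y| := by
        intro x y hx hy hxy
        obtain ⟨ξ, hξ, hslope⟩ := exists_hasDerivAt_eq_slope g (F (j+2)) hxy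
          ((hcont (j+1)).continuousOn) (fun z _ => hder (j+1) z)
        have hξmem : ξ ∈ Set.Icc a b := ⟨hx.1.trans (le_of_lt hξ.1), (le_of_lt hξ.2).trans hy.2⟩
        have hlb := hIcc ξ hξmem
        rw [show j+1+1 = j+2 from rfl] at hlb
        rw [hslope] at hlb
        rw [abs_div] at hlb
        have hyx : (0:ℝ) < y - x := by linarith
        rw [abs_of_pos hyx] at hlb
        rw [le_div_iff₀ hyx] at hlb
        have h1 : |x - y| = y - x := by rw [abs_sub_comm, abs_of_pos hyx]
        have h2 : |g x - g y| = |g y - g x| := abs_sub_comm _ _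
        rw [h1, h2]
        linarith
      intro x hx y hy
      rcases lt_trichotomy x y with h | h | h
      · exact key x y hx hy h
      · simp [h]
      · have := key y x hy hx h
        rwa [abs_sub_comm, abs_sub_comm (g y)] at this
    obtain ⟨c, hc, hcen⟩ := center hab ((hcont (j+1)).continuousOn) hexp
    set δ : ℝ := lam ^ (-(1:ℝ)/((j:ℝ)+2)) with hδdef
    have hδpos : 0 < δ := Real.rpow_pos_of_pos hlam _
    set a' := max a (c - δ) with ha'def
    set b' := min b (c + δ) with hb'def
    have haa' : a ≤ a' := le_max_left _ _
    have ha'c : a' ≤ c := max_le hc.1 (by linarith)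
    have hcb' : c ≤ b' := le_min hc.2 (by linarith)
    have hb'b : b' ≤ b := min_le_left _ _
    have ha'b' : a' ≤ b' := ha'c.trans hcb'
    have hcontInt : Continuous (fun x : ℝ => Complex.exp (Complex.I * (F 0 x : ℂ))) := by
      have := hcont 0
      fun_prop
    have hIntAll : ∀ u v : ℝ, IntervalIntegrable
        (fun x : ℝ => Complex.exp (Complex.I * (F 0 x : ℂ))) MeasureTheory.volume u v :=
      fun u v => hcontInt.intervalIntegrable u v
    have hsplit : (∫ x in a..b, Complex.exp (Complex.I * (F 0 x : ℂ))) =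
        (∫ x in a..a', Complex.exp (Complex.I * (F 0 x : ℂ))) +
        (∫ x in a'..b', Complex.exp (Complex.I * (F 0 x : ℂ))) +
        (∫ x in b'..b, Complex.exp (Complex.I * (F 0 x : ℂ))) := by
      rw [intervalIntegral.integral_add_adjacent_intervals (hIntAll a a') (hIntAll a' b')]
      rw [intervalIntegral.integral_add_adjacent_intervals (hIntAll a b') (hIntAll b' b)]
    -- middle bound
    have hmid : ‖∫ x in a'..b', Complex.exp (Complex.I * (F 0 x : ℂ))‖ ≤ 2 * δ := by
      have h1 : ∀ x ∈ Set.uIoc a' b', ‖Complex.exp (Complex.I * (F 0 x : ℂ))‖ ≤ 1 := by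
        intro x _
        simp [Complex.norm_exp]
      have := intervalIntegral.norm_integral_le_of_norm_le_const h1
      rw [one_mul] at this
      refine this.trans ?_
      rw [abs_of_nonneg (by linarith)]
      have h2 : b' ≤ c + δ := min_le_right _ _
      have h3 : c - δ ≤ a' := le_max_right _ _
      linarith
    -- side bounds
    have hside : ∀ u v : ℝ, a ≤ u → v ≤ b → u ≤ v →
        (∀ x ∈ Set.Icc u v, lam * δ ≤ |g x|) →
        ‖∫ x in u..v, Complex.exp (Complex.I * (F 0 x : ℂ))‖ ≤
          ((2:ℝ)^(j+3) - 2) * (lam * δ) ^ (-(1:ℝ)/(j+1)) := by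
      intro u v hu hv huv hglb
      apply ih (lam * δ) u v (by positivity) huv hglb
      intro hj0
      subst hj0
      rcases hsign with h | h
      · exact Or.inl (fun x hx => h x ⟨hu.trans hx.1, hx.2.trans hv⟩)
      · exact Or.inr (fun x hx => h x ⟨hu.trans hx.1, hx.2.trans hv⟩)
    have hleft : ‖∫ x in a..a', Complex.exp (Complex.I * (F 0 x : ℂ))‖ ≤
        ((2:ℝ)^(j+3) - 2) * (lam * δ) ^ (-(1:ℝ)/(j+1)) := by
      rcases le_or_gt (c - δ) a with h | h
      · have : a' = a := by rw [ha'def, max_eq_left (by linarith)]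
        rw [this, intervalIntegral.integral_same]
        have h28 : (2:ℝ) ≤ 2^(j+3) := by
          calc (2:ℝ) = 2^1 := (pow_one 2).symm
            _ ≤ 2^(j+3) := pow_le_pow_right₀ (by norm_num) (by omega)
        have : (0:ℝ) < (lam * δ) ^ (-(1:ℝ)/(j+1)) := Real.rpow_pos_of_pos (by positivity) _
        rw [norm_zero]
        nlinarith
      · have ha'eq : a' = c - δ := by rw [ha'def, max_eq_right (by linarith)]
        apply hside a a' (le_refl a) (ha'c.trans hc.2) haa'
        intro x hx
        have hxmem : x ∈ Set.Icc a b := ⟨hx.1, hx.2.trans (ha'c.trans hc.2)⟩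
        have := hcen x hxmem
        have hd : δ ≤ |x - c| := by
          rw [ha'eq] at hx
          rw [abs_sub_comm, abs_of_nonneg (by linarith [hx.2] : (0:ℝ) ≤ c - x)]
          linarith [hx.2]
        calc lam * δ ≤ lam * |x - c| := by nlinarith
          _ ≤ |g x| := this
    have hright : ‖∫ x in b'..b, Complex.exp (Complex.I * (F 0 x : ℂ))‖ ≤
        ((2:ℝ)^(j+3) - 2) * (lam * δ) ^ (-(1:ℝ)/(j+1)) := by
      rcases le_or_gt b (c + δ) with h | h
      · have : b' = b := by rw [hb'def, min_eq_left (by linarith)]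
        rw [this, intervalIntegral.integral_same]
        have h28 : (2:ℝ) ≤ 2^(j+3) := by
          calc (2:ℝ) = 2^1 := (pow_one 2).symm
            _ ≤ 2^(j+3) := pow_le_pow_right₀ (by norm_num) (by omega)
        have : (0:ℝ) < (lam * δ) ^ (-(1:ℝ)/(j+1)) := Real.rpow_pos_of_pos (by positivity) _
        rw [norm_zero]
        nlinarith
      · have hb'eq : b' = c + δ := by rw [hb'def, min_eq_right (by linarith)]
        apply hside b' b (hc.1.trans hcb') (le_refl b) hb'b
        intro x hx
        have hxmem : x ∈ Set.Icc a b := ⟨(hc.1.trans hcb').trans hx.1, hx.2⟩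
        have := hcen x hxmem
        have hd : δ ≤ |x - c| := by
          rw [hb'eq] at hx
          rw [abs_of_nonneg (by linarith [hx.1] : (0:ℝ) ≤ x - c)]
          linarith [hx.1]
        calc lam * δ ≤ lam * |x - c| := by nlinarith
          _ ≤ |g x| := this
    -- rpow algebra : (lam * δ) ^ (-(1:ℝ)/(j+1)) = δ
    have hrpow : (lam * δ) ^ (-(1:ℝ)/((j:ℝ)+1)) = δ := by
      rw [hδdef]
      rw [show lam * lam ^ (-(1:ℝ)/((j:ℝ)+2)) =
        lam ^ ((1:ℝ) + (-(1:ℝ)/((j:ℝ)+2))) by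
          rw [Real.rpow_add hlam, Real.rpow_one]]
      rw [← Real.rpow_mul hlam.le]
      congr 1
      have h2 : ((j:ℝ)+2) ≠ 0 := by positivity
      have h1 : ((j:ℝ)+1) ≠ 0 := by positivity
      field_simp
      ring
    have hfinal : ‖∫ x in a..b, Complex.exp (Complex.I * (F 0 x : ℂ))‖ ≤
        (2 * ((2:ℝ)^(j+3) - 2) + 2) * δ := by
      rw [hrpow] at hleft hright
      rw [hsplit]
      calc ‖((∫ x in a..a', Complex.exp (Complex.I * (F 0 x : ℂ))) +
            ∫ x in a'..b', Complex.exp (Complex.I * (F 0 x : ℂ))) +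
            ∫ x in b'..b, Complex.exp (Complex.I * (F 0 x : ℂ))‖
          ≤ ‖(∫ x in a..a', Complex.exp (Complex.I * (F 0 x : ℂ))) +
            ∫ x in a'..b', Complex.exp (Complex.I * (F 0 x : ℂ))‖ +
            ‖∫ x in b'..b, Complex.exp (Complex.I * (F 0 x : ℂ))‖ := norm_add_le _ _
        _ ≤ (‖∫ x in a..a', Complex.exp (Complex.I * (F 0 x : ℂ))‖ +
            ‖∫ x in a'..b', Complex.exp (Complex.I * (F 0 x : ℂ))‖) +
            ‖∫ x in b'..b, Complex.exp (Complex.I * (F 0 x : ℂ))‖ := by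
            gcongr
            exact norm_add_le _ _
        _ ≤ (((2:ℝ)^(j+3) - 2) * δ + 2 * δ) + ((2:ℝ)^(j+3) - 2) * δ := by
            gcongr
        _ = (2 * ((2:ℝ)^(j+3) - 2) + 2) * δ := by ring
    have hC : 2 * ((2:ℝ)^(j+3) - 2) + 2 = (2:ℝ)^(j+1+3) - 2 := by
      rw [show j+1+3 = (j+3)+1 from rfl, pow_succ]
      ring
    have hδeq' : lam ^ (-(1:ℝ)/(((j+1 : ℕ):ℝ)+1)) = δ := by
      rw [hδdef]
      congr 1
      push_cast
      ring
    rw [hδeq', ← hC]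
    exact hfinal


lemma desc_le_fact (n d : ℕ) : n.descFactorial d ≤ n.factorial := by
  rcases le_or_gt d n with h | h
  · calc n.descFactorial d ≤ (n-d).factorial * n.descFactorial d :=
        Nat.le_mul_of_pos_left _ (Nat.factorial_pos _)
      _ = n.factorial := Nat.factorial_mul_descFactorial h
  · rw [Nat.descFactorial_eq_zero_iff_lt.2 h]; exact Nat.zero_le _

noncomputable def Ffam (k : ℕ) (β : Fin k → ℝ) (i : ℕ) (x : ℝ) : ℝ :=
  2 * Real.pi * ∑ j : Fin k, β j * ((j.1+1).descFactorial i : ℝ) * x ^ (j.1+1-i)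

lemma Ffam_deriv (k : ℕ) (β : Fin k → ℝ) : ∀ i x, HasDerivAt (Ffam k β i) (Ffam k β (i+1) x) x := by
  intro i x
  have h : ∀ j : Fin k, HasDerivAt
      (fun x : ℝ => β j * ((j.1+1).descFactorial i : ℝ) * x ^ (j.1+1-i))
      (β j * ((j.1+1).descFactorial (i+1) : ℝ) * x ^ (j.1+1-(i+1))) x := by
    intro j
    have h0 := (hasDerivAt_pow (j.1+1-i) x).const_mul (β j * ((j.1+1).descFactorial i : ℝ))
    refine h0.congr_deriv ?_
    have he : j.1+1-(i+1) = (j.1+1-i) - 1 := by omega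
    rw [he, Nat.descFactorial_succ, Nat.cast_mul]
    ring
  have hsum := HasDerivAt.fun_sum (fun j (_ : j ∈ Finset.univ) => h j)
  exact hsum.const_mul (2 * Real.pi)

lemma Ffam_cont (k : ℕ) (β : Fin k → ℝ) : ∀ i, Continuous (Ffam k β i) := by
  intro i
  unfold Ffam
  fun_prop

/-- **Oscillatory integral (van der Corput) estimate.** For
`v_N(β) = ∫_0^N e^{2πi(β₁x + β₂x² + ⋯ + β_k x^k)} dx` one has
`|v_N(β)| ≤ C N (1 + ∑_j N^j|β_j|)^(-1/k)`. -/
theorem stmt_18 (k : ℕ) (hk : 2 ≤ k) :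
    ∃ C : ℝ, 0 < C ∧ ∀ (β : Fin k → ℝ) (N : ℕ), 0 < N →
      ‖∫ x in (0 : ℝ)..(N : ℝ),
          Complex.exp ((2 * Real.pi * Complex.I) *
            ((∑ j : Fin k, β j * x ^ (j.1 + 1) : ℝ) : ℂ))‖ ≤
        C * N * (1 + ∑ j : Fin k, (N : ℝ) ^ (j.1 + 1) * |β j|) ^ (-(1 : ℝ) / k) := by
  have hkR : (2:ℝ) ≤ (k:ℝ) := by exact_mod_cast hk
  set B : ℝ := 2 * ((k:ℝ)+1)^2 * (Nat.factorial (k+1)) with hBdef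
  have hfactpos : (0:ℝ) < (Nat.factorial (k+1) : ℝ) := by exact_mod_cast Nat.factorial_pos _
  have hB1 : 1 ≤ B := by
    have h1 : (1:ℝ) ≤ ((k:ℝ)+1)^2 := by nlinarith
    have h2 : (1:ℝ) ≤ (Nat.factorial (k+1) : ℝ) := by exact_mod_cast Nat.factorial_pos _
    rw [hBdef]; nlinarith
  have hBpos : 0 < B := lt_of_lt_of_le one_pos hB1
  have hBkk : 2 * (k:ℝ) * (Nat.factorial k) ≤ B := by
    have h1 : (k:ℝ) ≤ ((k:ℝ)+1)^2 := by nlinarith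
    have h2 : (Nat.factorial k : ℝ) ≤ (Nat.factorial (k+1) : ℝ) := by
      exact_mod_cast Nat.factorial_le (Nat.le_succ k)
    have h3 : (0:ℝ) ≤ (Nat.factorial k : ℝ) := Nat.cast_nonneg _
    have h4 : (0:ℝ) ≤ (k:ℝ) := Nat.cast_nonneg _
    rw [hBdef]; nlinarith
  refine ⟨(2:ℝ)^(k+3) * (2 * (k:ℝ) * B^k) + ((k:ℝ) * B^k + 2), by positivity, ?_⟩
  intro β N hN
  set S : ℝ := ∑ j : Fin k, (N : ℝ) ^ (j.1 + 1) * |β j| with hSdef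
  set γ : Fin k → ℝ := fun j => (N:ℝ)^(j.1+1) * |β j| with hγdef
  have hSγ : S = ∑ j : Fin k, γ j := rfl
  have hγ0 : ∀ j, 0 ≤ γ j := fun j => by rw [hγdef]; positivity
  have hS0 : 0 ≤ S := by rw [hSγ]; exact Finset.sum_nonneg (fun j _ => hγ0 j)
  have hNpos : (0:ℝ) < N := by exact_mod_cast hN
  set F := Ffam k β with hFdef
  have hder := Ffam_deriv k β
  have hcont := Ffam_cont k β
  have hF0 : ∀ x : ℝ, F 0 x = 2 * Real.pi * ∑ j : Fin k, β j * x ^ (j.1+1) := by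
    intro x
    rw [hFdef]
    unfold Ffam
    congr 1
    apply Finset.sum_congr rfl
    intro j _
    simp
  have hintEq : (∫ x in (0:ℝ)..(N:ℝ), Complex.exp ((2 * Real.pi * Complex.I) *
        ((∑ j : Fin k, β j * x ^ (j.1 + 1) : ℝ) : ℂ))) =
      ∫ x in (0:ℝ)..(N:ℝ), Complex.exp (Complex.I * (F 0 x : ℂ)) := by
    apply intervalIntegral.integral_congr
    intro x _
    have h : (2 * Real.pi * Complex.I) * ((∑ j : Fin k, β j * x ^ (j.1 + 1) : ℝ) : ℂ)
        = Complex.I * (F 0 x : ℂ) := by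
      rw [hF0 x]
      push_cast
      ring
    dsimp only
    rw [h]
  rw [hintEq]
  have hexpone : (1:ℝ) + S > 0 := by linarith
  rcases le_or_gt S ((k:ℝ) * B^k) with hsmall | hbig
  · -- trivial bound case
    have htriv : ‖∫ x in (0:ℝ)..(N:ℝ), Complex.exp (Complex.I * (F 0 x : ℂ))‖ ≤ N := by
      have h1 : ∀ x ∈ Set.uIoc (0:ℝ) (N:ℝ), ‖Complex.exp (Complex.I * (F 0 x : ℂ))‖ ≤ 1 :=
        fun x _ => by simp [Complex.norm_exp]
      have := intervalIntegral.norm_integral_le_of_norm_le_const h1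
      rw [one_mul, sub_zero, abs_of_nonneg (le_of_lt hNpos)] at this
      exact this
    have hpow : (1 + S) ^ ((1:ℝ)/k) ≤ (k:ℝ) * B^k + 1 := by
      calc (1 + S) ^ ((1:ℝ)/k) ≤ (1 + S) ^ (1:ℝ) := by
            apply Real.rpow_le_rpow_of_exponent_le (by linarith)
            rw [div_le_one (by linarith)]
            linarith
        _ = 1 + S := Real.rpow_one _
        _ ≤ (k:ℝ) * B^k + 1 := by linarith
    have hprod : ((1:ℝ) + S) ^ ((1:ℝ)/k) * (1 + S) ^ (-(1:ℝ)/k) = 1 := by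
      rw [← Real.rpow_add hexpone]
      have h : (1:ℝ)/k + (-(1:ℝ)/k) = 0 := by ring
      rw [h, Real.rpow_zero]
    have hrpos : (0:ℝ) < (1 + S) ^ (-(1:ℝ)/k) := Real.rpow_pos_of_pos hexpone _
    calc ‖∫ x in (0:ℝ)..(N:ℝ), Complex.exp (Complex.I * (F 0 x : ℂ))‖ ≤ (N:ℝ) := htriv
      _ = ((1 + S) ^ ((1:ℝ)/k) * (1 + S) ^ (-(1:ℝ)/k)) * N := by rw [hprod]; ring
      _ ≤ (((k:ℝ) * B^k + 1) * (1 + S) ^ (-(1:ℝ)/k)) * N := by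
          have := mul_le_mul_of_nonneg_right hpow (le_of_lt hrpos)
          nlinarith
      _ ≤ ((2:ℝ)^(k+3) * (2 * (k:ℝ) * B^k) + ((k:ℝ) * B^k + 2)) * N * (1 + S) ^ (-(1:ℝ)/k) := by
          have h1 : (k:ℝ) * B^k + 1 ≤ (2:ℝ)^(k+3) * (2 * (k:ℝ) * B^k) + ((k:ℝ) * B^k + 2) := by
            have : (0:ℝ) ≤ (2:ℝ)^(k+3) * (2 * (k:ℝ) * B^k) := by positivity
            linarith
          have h2 := mul_le_mul_of_nonneg_right h1
            (by positivity : (0:ℝ) ≤ (1 + S) ^ (-(1:ℝ)/k) * N)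
          calc (((k:ℝ) * B^k + 1) * (1 + S) ^ (-(1:ℝ)/k)) * N
              = ((k:ℝ) * B^k + 1) * ((1 + S) ^ (-(1:ℝ)/k) * N) := by ring
            _ ≤ ((2:ℝ)^(k+3) * (2 * (k:ℝ) * B^k) + ((k:ℝ) * B^k + 2)) *
                ((1 + S) ^ (-(1:ℝ)/k) * N) := h2
            _ = ((2:ℝ)^(k+3) * (2 * (k:ℝ) * B^k) + ((k:ℝ) * B^k + 2)) * N *
                (1 + S) ^ (-(1:ℝ)/k) := by ring
  · -- main case
    obtain ⟨i, -, hmax⟩ := Finset.exists_max_image Finset.univ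
      (fun j : Fin k => γ j * B^(j.1)) ⟨⟨0, by omega⟩, Finset.mem_univ _⟩
    have hγik : ∀ j : Fin k, γ j ≤ γ i * B^(k-1) := by
      intro j
      have h1 : γ j * 1 ≤ γ j * B^(j.1) :=
        mul_le_mul_of_nonneg_left (one_le_pow₀ hB1) (hγ0 j)
      have h2 := hmax j (Finset.mem_univ j)
      have h3 : γ i * B^(i.1) ≤ γ i * B^(k-1) :=
        mul_le_mul_of_nonneg_left (pow_le_pow_right₀ hB1 (by omega : i.1 ≤ k-1)) (hγ0 i)
      linarith [mul_one (γ j)]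
    have hcard : (Finset.univ : Finset (Fin k)).card = k := by simp
    have hSk : S ≤ (k:ℝ) * (γ i * B^(k-1)) := by
      rw [hSγ]
      have := Finset.sum_le_card_nsmul Finset.univ γ (γ i * B^(k-1)) (fun j _ => hγik j)
      rwa [hcard, nsmul_eq_mul] at this
    have hγiB : B ≤ γ i := by
      by_contra hcon
      push_neg at hcon
      have hBk : B^k = B^(k-1) * B := by rw [← pow_succ]; congr 1; omega
      have hpw : (0:ℝ) < B^(k-1) := by positivity
      have hkpos : (0:ℝ) < (k:ℝ) := by linarith
      rw [hBk] at hbig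
      nlinarith [mul_lt_mul_of_pos_left hcon (mul_pos hkpos hpw)]
    have hγi1 : (1:ℝ) ≤ γ i := le_trans hB1 hγiB
    have hγipos : (0:ℝ) < γ i := lt_of_lt_of_le one_pos hγi1
    have hji : ∀ j : Fin k, i.1 < j.1 → γ j ≤ γ i / B := by
      intro j hj
      have h2 := hmax j (Finset.mem_univ j)
      have h1 : γ j * (B^(i.1) * B) ≤ γ j * B^(j.1) := by
        rw [← pow_succ]
        exact mul_le_mul_of_nonneg_left (pow_le_pow_right₀ hB1 (by omega)) (hγ0 j)
      have hBpow : (0:ℝ) < B^(i.1) := by positivity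
      rw [le_div_iff₀ hBpos]
      have h3 : (γ j * B) * B^(i.1) ≤ γ i * B^(i.1) := by nlinarith
      exact le_of_mul_le_mul_right h3 hBpow
    set d := i.1 + 1 with hddef
    have hdk : d ≤ k := i.isLt
    -- generic term bound
    have hterm : ∀ (D : ℕ) (x : ℝ), 0 ≤ x → x ≤ (N:ℝ) → ∀ j : Fin k, D ≤ j.1+1 →
        |β j * ((j.1+1).descFactorial D : ℝ) * x ^ (j.1+1-D)|
          ≤ (Nat.factorial k : ℝ) * γ j / (N:ℝ)^D := by
      intro D x hx0 hxN j hDj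
      have hb0 : (0:ℝ) ≤ |β j| := abs_nonneg _
      have hfk : ((j.1+1).descFactorial D : ℝ) ≤ (Nat.factorial k : ℝ) := by
        exact_mod_cast le_trans (desc_le_fact _ _)
          (Nat.factorial_le (by omega : j.1+1 ≤ k))
      have hxp : |x ^ (j.1+1-D)| ≤ (N:ℝ)^(j.1+1-D) := by
        rw [abs_of_nonneg (by positivity)]
        exact pow_le_pow_left₀ hx0 hxN _
      have hNe : (N:ℝ)^(j.1+1-D) * (N:ℝ)^D = (N:ℝ)^(j.1+1) := by
        rw [← pow_add]; congr 1; omega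
      rw [abs_mul, abs_mul,
        abs_of_nonneg (by positivity : (0:ℝ) ≤ ((j.1+1).descFactorial D : ℝ))]
      rw [le_div_iff₀ (by positivity : (0:ℝ) < (N:ℝ)^D)]
      have h2 : (|β j| * ((j.1+1).descFactorial D:ℝ)) * |x ^ (j.1+1-D)|
          ≤ (|β j| * (Nat.factorial k:ℝ)) * (N:ℝ)^(j.1+1-D) :=
        mul_le_mul (mul_le_mul_of_nonneg_left hfk hb0) hxp (abs_nonneg _) (by positivity)
      have h3 := mul_le_mul_of_nonneg_right h2 (by positivity : (0:ℝ) ≤ (N:ℝ)^D)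
      have h5 : |β j| * (Nat.factorial k:ℝ) * (N:ℝ)^(j.1+1-D) * (N:ℝ)^D
          = (Nat.factorial k:ℝ) * γ j := by
        simp only [hγdef]
        rw [mul_assoc, hNe]
        ring
      linarith
    have hkk2 : ∀ D : ℕ, (k:ℝ) * ((Nat.factorial k:ℝ) * (γ i / B) / (N:ℝ)^D)
        ≤ (γ i / 2) / (N:ℝ)^D := by
      intro D
      have hNd : (0:ℝ) < (N:ℝ)^D := by positivity
      have heq : (k:ℝ) * ((Nat.factorial k:ℝ) * (γ i / B) / (N:ℝ)^D)
          = ((k:ℝ) * (Nat.factorial k:ℝ) * γ i / B) / (N:ℝ)^D := by ring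
      rw [heq]
      apply div_le_div_of_nonneg_right ?_ hNd.le
      rw [div_le_div_iff₀ hBpos (by norm_num : (0:ℝ) < 2)]
      nlinarith [Nat.cast_nonneg (α := ℝ) (Nat.factorial k)]
    -- rest-sum bound for exponent D, over a set of indices avoiding small ones
    have hNd0 : ∀ D : ℕ, (0:ℝ) < (N:ℝ)^D := fun D => by positivity
    have hlow : ∀ x ∈ Set.Icc (0:ℝ) (N:ℝ), Real.pi * γ i / (N:ℝ)^d ≤ |F d x| := by
      intro x hx
      obtain ⟨hx0, hxN⟩ := hx
      set t : Fin k → ℝ := fun j => β j * ((j.1+1).descFactorial d : ℝ) * x ^ (j.1+1-d)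
        with htdef
      have hFd : F d x = 2 * Real.pi * ∑ j : Fin k, t j := rfl
      have hsplit : ∑ j : Fin k, t j = t i + ∑ j ∈ Finset.univ.erase i, t j := by
        rw [Finset.add_sum_erase _ t (Finset.mem_univ i)]
      have hβi : |β i| = γ i / (N:ℝ)^d := by
        simp only [hγdef]
        rw [show i.1+1 = d from rfl]
        field_simp
      have hti : γ i / (N:ℝ)^d ≤ |t i| := by
        rw [htdef]
        dsimp only
        rw [show i.1+1-d = 0 by omega, pow_zero, mul_one, show i.1+1 = d from rfl,
          Nat.descFactorial_self]
        rw [abs_mul, abs_of_nonneg (by positivity : (0:ℝ) ≤ (Nat.factorial d : ℝ))]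
        have h1 : (1:ℝ) ≤ (Nat.factorial d : ℝ) := by
          exact_mod_cast Nat.factorial_pos d
        nlinarith [abs_nonneg (β i), hβi]
      have hrest : |∑ j ∈ Finset.univ.erase i, t j|
          ≤ (k:ℝ) * ((Nat.factorial k:ℝ) * (γ i / B) / (N:ℝ)^d) := by
        have hb : ∀ j ∈ Finset.univ.erase i, |t j|
            ≤ (Nat.factorial k:ℝ) * (γ i / B) / (N:ℝ)^d := by
          intro j hj
          have hne : j ≠ i := (Finset.mem_erase.1 hj).1
          have hvne : j.1 ≠ i.1 := fun h => hne (Fin.ext h)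
          rcases lt_or_gt_of_ne hvne with hlt | hgt
          · rw [htdef]
            dsimp only
            rw [show ((j.1+1).descFactorial d) = 0 from
              Nat.descFactorial_eq_zero_iff_lt.2 (by omega)]
            simp only [Nat.cast_zero, mul_zero, zero_mul, abs_zero]
            positivity
          · have h1 := hterm d x hx0 hxN j (by omega)
            have h2 : (Nat.factorial k:ℝ) * γ j / (N:ℝ)^d
                ≤ (Nat.factorial k:ℝ) * (γ i / B) / (N:ℝ)^d := by
              apply div_le_div_of_nonneg_right ?_ (hNd0 d).le
              exact mul_le_mul_of_nonneg_left (hji j hgt) (Nat.cast_nonneg _)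
            exact le_trans h1 h2
        calc |∑ j ∈ Finset.univ.erase i, t j| ≤ ∑ j ∈ Finset.univ.erase i, |t j| :=
              Finset.abs_sum_le_sum_abs _ _
          _ ≤ (Finset.univ.erase i).card • ((Nat.factorial k:ℝ) * (γ i / B) / (N:ℝ)^d) :=
              Finset.sum_le_card_nsmul _ _ _ hb
          _ ≤ (k:ℝ) * ((Nat.factorial k:ℝ) * (γ i / B) / (N:ℝ)^d) := by
              rw [nsmul_eq_mul]
              apply mul_le_mul_of_nonneg_right ?_ (by positivity)
              rw [Finset.card_erase_of_mem (Finset.mem_univ i), hcard]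
              exact_mod_cast Nat.cast_le.2 (Nat.sub_le k 1)
      have hsum : (γ i / 2) / (N:ℝ)^d ≤ |∑ j : Fin k, t j| := by
        have h1 : |t i| ≤ |∑ j : Fin k, t j| + |∑ j ∈ Finset.univ.erase i, t j| := by
          have : t i = (∑ j : Fin k, t j) - ∑ j ∈ Finset.univ.erase i, t j := by
            rw [hsplit]; ring
          rw [this]
          exact abs_sub _ _
        have h2 := hkk2 d
        have h3 : γ i / (N:ℝ)^d - (γ i / 2) / (N:ℝ)^d = (γ i / 2) / (N:ℝ)^d := by ring
        linarith
      rw [hFd, abs_mul, abs_of_pos (by positivity : (0:ℝ) < 2 * Real.pi)]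
      have hπ : (0:ℝ) < Real.pi := Real.pi_pos
      have : Real.pi * γ i / (N:ℝ)^d = 2 * Real.pi * ((γ i / 2) / (N:ℝ)^d) := by ring
      rw [this]
      exact mul_le_mul_of_nonneg_left hsum (by positivity)
    set lam : ℝ := Real.pi * γ i / (N:ℝ)^d with hlamdef
    have hlam : 0 < lam := by
      rw [hlamdef]; positivity
    have hmain : ‖∫ x in (0:ℝ)..(N:ℝ), Complex.exp (Complex.I * (F 0 x : ℂ))‖
        ≤ (2:ℝ)^(k+3) * N * γ i ^ (-(1:ℝ)/k) := by
      have hone_k : (1:ℝ)/k ≤ 1 := by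
        rw [div_le_one (by linarith : (0:ℝ) < (k:ℝ))]
        linarith
      have h2k3 : (1:ℝ) ≤ (2:ℝ)^(k+3) := one_le_pow₀ (by norm_num)
      rcases Nat.eq_zero_or_pos i.1 with hi0 | hi1
      · -- first derivative case
        have hd1 : d = 1 := by omega
        have hl1 : ∀ x ∈ Set.Icc (0:ℝ) (N:ℝ), lam ≤ |F 1 x| := by
          intro x hx
          have := hlow x hx
          rwa [hd1] at this
        have hM2 : ∀ x ∈ Set.Icc (0:ℝ) (N:ℝ), |F 2 x| ≤ Real.pi * γ i / (N:ℝ)^2 := by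
          intro x hx
          obtain ⟨hx0, hxN⟩ := hx
          have hFd : F 2 x = 2 * Real.pi *
              ∑ j : Fin k, (β j * ((j.1+1).descFactorial 2 : ℝ) * x ^ (j.1+1-2)) := rfl
          have hb : ∀ j ∈ Finset.univ, |β j * ((j.1+1).descFactorial 2 : ℝ) * x ^ (j.1+1-2)|
              ≤ (Nat.factorial k:ℝ) * (γ i / B) / (N:ℝ)^2 := by
            intro j _
            rcases Nat.eq_zero_or_pos j.1 with hj0 | hj1
            · rw [show ((j.1+1).descFactorial 2) = 0 from
                Nat.descFactorial_eq_zero_iff_lt.2 (by omega)]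
              simp only [Nat.cast_zero, mul_zero, zero_mul, abs_zero]
              positivity
            · have h1 := hterm 2 x hx0 hxN j (by omega)
              have h2 : (Nat.factorial k:ℝ) * γ j / (N:ℝ)^2
                  ≤ (Nat.factorial k:ℝ) * (γ i / B) / (N:ℝ)^2 := by
                apply div_le_div_of_nonneg_right ?_ (hNd0 2).le
                exact mul_le_mul_of_nonneg_left (hji j (by omega)) (Nat.cast_nonneg _)
              exact le_trans h1 h2
          have hsum : |∑ j : Fin k, (β j * ((j.1+1).descFactorial 2 : ℝ) * x ^ (j.1+1-2))|
              ≤ (k:ℝ) * ((Nat.factorial k:ℝ) * (γ i / B) / (N:ℝ)^2) := by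
            calc |∑ j : Fin k, (β j * ((j.1+1).descFactorial 2 : ℝ) * x ^ (j.1+1-2))|
                ≤ ∑ j : Fin k, |β j * ((j.1+1).descFactorial 2 : ℝ) * x ^ (j.1+1-2)| :=
                  Finset.abs_sum_le_sum_abs _ _
              _ ≤ (Finset.univ : Finset (Fin k)).card •
                  ((Nat.factorial k:ℝ) * (γ i / B) / (N:ℝ)^2) :=
                  Finset.sum_le_card_nsmul _ _ _ hb
              _ = (k:ℝ) * ((Nat.factorial k:ℝ) * (γ i / B) / (N:ℝ)^2) := by
                  rw [hcard, nsmul_eq_mul]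
          rw [hFd, abs_mul, abs_of_pos (by positivity : (0:ℝ) < 2*Real.pi)]
          have heq : Real.pi * γ i / (N:ℝ)^2 = 2*Real.pi * ((γ i/2)/(N:ℝ)^2) := by ring
          rw [heq]
          exact mul_le_mul_of_nonneg_left (le_trans hsum (hkk2 2)) (by positivity)
        have hMb : ((N:ℝ) - 0) * (Real.pi * γ i / (N:ℝ)^2) ≤ lam := by
          rw [hlamdef, hd1, sub_zero]
          apply le_of_eq
          field_simp
        have h3 := baseB (le_of_lt hNpos) hlam (hder 0) (hder 1) (hcont 2) hl1 hM2 hMb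
        have hπ : (3:ℝ) < Real.pi := Real.pi_gt_three
        have h4 : 3/lam ≤ (N:ℝ) * (γ i)⁻¹ := by
          rw [div_le_iff₀ hlam, hlamdef, hd1, pow_one]
          have heq2 : (N:ℝ) * (γ i)⁻¹ * (Real.pi * γ i / (N:ℝ)) = Real.pi := by
            field_simp
          rw [heq2]
          linarith
        have h5 : (γ i)⁻¹ ≤ γ i ^ (-(1:ℝ)/k) := by
          calc (γ i)⁻¹ = γ i ^ (-1:ℝ) := (Real.rpow_neg_one _).symm
            _ ≤ γ i ^ (-(1:ℝ)/k) := by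
                apply Real.rpow_le_rpow_of_exponent_le hγi1
                rw [neg_div]
                linarith
        calc ‖∫ x in (0:ℝ)..(N:ℝ), Complex.exp (Complex.I * (F 0 x : ℂ))‖ ≤ 3/lam := h3
          _ ≤ (N:ℝ) * (γ i)⁻¹ := h4
          _ ≤ (N:ℝ) * γ i ^ (-(1:ℝ)/k) := mul_le_mul_of_nonneg_left h5 hNpos.le
          _ ≤ (2:ℝ)^(k+3) * N * γ i ^ (-(1:ℝ)/k) := by
              have hrp : (0:ℝ) < γ i ^ (-(1:ℝ)/k) := Real.rpow_pos_of_pos hγipos _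
              nlinarith [mul_le_mul_of_nonneg_right
                (mul_le_mul_of_nonneg_right h2k3 hNpos.le) hrp.le]
      · -- higher derivative case
        have hv := vdc i.1 F hder hcont lam 0 (N:ℝ) hlam hNpos.le hlow
          (fun h => absurd h (by omega))
        have hdR : (0:ℝ) < (d:ℝ) := by
          exact_mod_cast Nat.succ_pos i.1
        have hcast : ((i.1:ℝ)+1) = (d:ℝ) := by
          rw [hddef]
          push_cast
          ring
        have hlamval : lam ^ (-(1:ℝ)/(d:ℝ)) = (Real.pi * γ i) ^ (-(1:ℝ)/(d:ℝ)) * (N:ℝ) := by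
          rw [hlamdef, div_eq_mul_inv (Real.pi * γ i) _,
            Real.mul_rpow (by positivity) (by positivity)]
          congr 1
          calc (((N:ℝ)^(d:ℕ))⁻¹) ^ (-(1:ℝ)/(d:ℝ))
              = (((N:ℝ)^(d:ℕ)) ^ (-(1:ℝ)/(d:ℝ)))⁻¹ := Real.inv_rpow (by positivity) _
            _ = (((N:ℝ) ^ ((d:ℕ):ℝ)) ^ (-(1:ℝ)/(d:ℝ)))⁻¹ := by
                rw [Real.rpow_natCast]
            _ = ((N:ℝ) ^ (((d:ℕ):ℝ) * (-(1:ℝ)/(d:ℝ))))⁻¹ := by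
                rw [← Real.rpow_mul hNpos.le]
            _ = ((N:ℝ) ^ (-1:ℝ))⁻¹ := by
                rw [show ((d:ℕ):ℝ) * (-(1:ℝ)/(d:ℝ)) = -1 by field_simp]
            _ = (N:ℝ) := by rw [Real.rpow_neg_one, inv_inv]
        have hπγ : (Real.pi * γ i) ^ (-(1:ℝ)/(d:ℝ)) ≤ γ i ^ (-(1:ℝ)/(d:ℝ)) := by
          apply Real.rpow_le_rpow_of_nonpos hγipos
          · nlinarith [Real.pi_gt_three]
          · apply div_nonpos_of_nonpos_of_nonneg <;> [norm_num; positivity]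
        have hdd2 : γ i ^ (-(1:ℝ)/(d:ℝ)) ≤ γ i ^ (-(1:ℝ)/(k:ℝ)) := by
          apply Real.rpow_le_rpow_of_exponent_le hγi1
          rw [neg_div, neg_div, neg_le_neg_iff]
          apply one_div_le_one_div_of_le hdR
          exact_mod_cast hdk
        have hcoef : (2:ℝ)^(i.1+3) - 2 ≤ 2^(k+3) := by
          have h8 : (2:ℝ)^(i.1+3) ≤ 2^(k+3) := pow_le_pow_right₀ (by norm_num) (by omega)
          linarith
        have hq1 : (Real.pi * γ i)^(-(1:ℝ)/(d:ℝ)) ≤ γ i ^ (-(1:ℝ)/(k:ℝ)) := le_trans hπγ hdd2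
        calc ‖∫ x in (0:ℝ)..(N:ℝ), Complex.exp (Complex.I * (F 0 x : ℂ))‖
            ≤ ((2:ℝ)^(i.1+3) - 2) * lam ^ (-(1:ℝ)/((i.1:ℝ)+1)) := hv
          _ = ((2:ℝ)^(i.1+3) - 2) * ((Real.pi * γ i) ^ (-(1:ℝ)/(d:ℝ)) * (N:ℝ)) := by
              rw [hcast, hlamval]
          _ ≤ (2:ℝ)^(k+3) * (γ i ^ (-(1:ℝ)/(k:ℝ)) * (N:ℝ)) := by
              apply mul_le_mul hcoef
                (mul_le_mul_of_nonneg_right hq1 hNpos.le)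
                (by positivity) (by positivity)
          _ = (2:ℝ)^(k+3) * N * γ i ^ (-(1:ℝ)/k) := by ring
    -- shared ending
    set e : ℝ := -(1:ℝ)/k with hedef
    have hek : e ≤ 0 := by
      rw [hedef]
      apply div_nonpos_of_nonpos_of_nonneg <;> [norm_num; linarith]
    set M : ℝ := 2*(k:ℝ)*B^(k-1) with hMdef
    have hM1 : (1:ℝ) ≤ M := by
      rw [hMdef]
      have : (1:ℝ) ≤ B^(k-1) := one_le_pow₀ hB1
      nlinarith
    have hMpos : (0:ℝ) < M := lt_of_lt_of_le one_pos hM1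
    have hS1 : (1:ℝ) ≤ S := by
      have h1 : (1:ℝ) ≤ B^k := one_le_pow₀ hB1
      nlinarith
    have h1S2 : 1 + S ≤ M * γ i := by
      rw [hMdef]
      nlinarith [hSk]
    have h2 : (M * γ i) ^ e ≤ (1+S)^e :=
      Real.rpow_le_rpow_of_nonpos hexpone h1S2 hek
    have h3 : (M * γ i) ^ e = M^e * γ i^e := Real.mul_rpow (le_of_lt hMpos) (le_of_lt hγipos)
    have h4 : M⁻¹ ≤ M^e := by
      have he1 : (-1:ℝ) ≤ e := by
        rw [hedef, neg_div]
        have h : (1:ℝ)/k ≤ 1 := by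
          rw [div_le_one (by linarith : (0:ℝ) < (k:ℝ))]
          linarith
        linarith [h]
      calc M⁻¹ = M ^ (-1:ℝ) := (Real.rpow_neg_one M).symm
        _ ≤ M ^ e := Real.rpow_le_rpow_of_exponent_le hM1 he1
    have h5 : γ i ^ e ≤ M * (1+S)^e := by
      have hγe : (0:ℝ) < γ i ^ e := Real.rpow_pos_of_pos hγipos _
      have h6 : M⁻¹ * γ i ^ e ≤ (1+S)^e := by
        calc M⁻¹ * γ i ^ e ≤ M^e * γ i ^ e :=
              mul_le_mul_of_nonneg_right h4 (le_of_lt hγe)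
          _ = (M * γ i) ^ e := h3.symm
          _ ≤ (1+S)^e := h2
      have h7 := mul_le_mul_of_nonneg_left h6 (le_of_lt hMpos)
      rw [← mul_assoc, mul_inv_cancel₀ (ne_of_gt hMpos), one_mul] at h7
      exact h7
    have hBk1 : B^(k-1) ≤ B^k := pow_le_pow_right₀ hB1 (Nat.sub_le k 1)
    calc ‖∫ x in (0:ℝ)..(N:ℝ), Complex.exp (Complex.I * (F 0 x : ℂ))‖
        ≤ (2:ℝ)^(k+3) * N * γ i ^ e := hmain
      _ ≤ (2:ℝ)^(k+3) * N * (M * (1+S)^e) := by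
          apply mul_le_mul_of_nonneg_left h5 (by positivity)
      _ = ((2:ℝ)^(k+3) * M) * N * (1+S)^e := by ring
      _ ≤ ((2:ℝ)^(k+3) * (2 * (k:ℝ) * B^k) + ((k:ℝ) * B^k + 2)) * N * (1+S)^e := by
          have hr : (0:ℝ) ≤ (1+S)^e := le_of_lt (Real.rpow_pos_of_pos hexpone _)
          have hc : (2:ℝ)^(k+3) * M ≤ (2:ℝ)^(k+3) * (2 * (k:ℝ) * B^k) + ((k:ℝ) * B^k + 2) := by
            rw [hMdef]
            have h8 : (2:ℝ)^(k+3) * (2*(k:ℝ)*B^(k-1)) ≤ (2:ℝ)^(k+3) * (2*(k:ℝ)*B^k) := by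
              apply mul_le_mul_of_nonneg_left ?_ (by positivity)
              nlinarith
            have h9 : (0:ℝ) ≤ (k:ℝ) * B^k + 2 := by positivity
            linarith
          have := mul_le_mul_of_nonneg_right hc (by positivity : (0:ℝ) ≤ (N:ℝ) * (1+S)^e)
          calc ((2:ℝ)^(k+3) * M) * N * (1+S)^e
              = ((2:ℝ)^(k+3) * M) * ((N:ℝ) * (1+S)^e) := by ring
            _ ≤ ((2:ℝ)^(k+3) * (2 * (k:ℝ) * B^k) + ((k:ℝ) * B^k + 2)) * ((N:ℝ) * (1+S)^e) :=
                this
            _ = ((2:ℝ)^(k+3) * (2 * (k:ℝ) * B^k) + ((k:ℝ) * B^k + 2)) * N * (1+S)^e := by ring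
end
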